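/- Let p ≥ 1, let 0 ≤ δ < 1, let B ∈ ℝ^{p×p} satisfy ‖B‖₂ ≤ δ, set S := (1/12)·B·Bᵀ − (1/2)·I_p, and let C be a real p×p skew-symmetric matrix. If Γ ∈ ℝ^{p×p} solves the Sylvester equation S·Γ + Γ·S = C, then ‖Γ‖₂ ≤ (6/(6−δ²))·‖C‖₂. -/
import Mathlib


open Matrix

/-- Spectral norm: operator norm induced by the Euclidean vector norm. -/
noncomputable def specNorm {m n : Type*} [Fintype m] [Fintype n] [DecidableEq n]
    (M : Matrix m n ℝ) : ℝ :=
  ‖LinearMap.toContinuousLinearMap (Matrix.toEuclideanLin M)‖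

open scoped Matrix.Norms.L2Operator in
lemma specNorm_eq_l2 {m n : Type*} [Fintype m] [Fintype n] [DecidableEq n]
    (M : Matrix m n ℝ) : specNorm M = ‖M‖ :=
  (Matrix.l2_opNorm_def M).symm

open scoped Matrix.Norms.L2Operator in
theorem sylvester_solution_norm_bound (p : ℕ) (hp : 1 ≤ p) (δ : ℝ)
    (hδ0 : 0 ≤ δ) (hδ1 : δ < 1)
    (B : Matrix (Fin p) (Fin p) ℝ) (hB : specNorm B ≤ δ)
    (S : Matrix (Fin p) (Fin p) ℝ)
    (hS : S = (1 / 12 : ℝ) • (B * Bᵀ) - (1 / 2 : ℝ) • (1 : Matrix (Fin p) (Fin p) ℝ))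
    (C : Matrix (Fin p) (Fin p) ℝ) (hC : Cᵀ = -C)
    (Γ : Matrix (Fin p) (Fin p) ℝ) (hΓ : S * Γ + Γ * S = C) :
    specNorm Γ ≤ (6 / (6 - δ ^ 2)) * specNorm C := by
  rw [specNorm_eq_l2, specNorm_eq_l2] at *
  -- identity: Γ = (1/12) • (B*Bᵀ*Γ + Γ*(B*Bᵀ)) - C
  have key : Γ = (1 / 12 : ℝ) • (B * Bᵀ * Γ + Γ * (B * Bᵀ)) - C := by
    rw [← hΓ, hS]
    noncomm_ring
    module
  have hBT : ‖Bᵀ‖ = ‖B‖ := by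
    have h : Bᴴ = Bᵀ := by
      ext i j; simp [Matrix.conjTranspose_apply]
    rw [← h]; exact Matrix.l2_opNorm_conjTranspose B
  have hBB : ‖B * Bᵀ‖ ≤ δ ^ 2 := by
    calc ‖B * Bᵀ‖ ≤ ‖B‖ * ‖Bᵀ‖ := norm_mul_le _ _
    _ = ‖B‖ * ‖B‖ := by rw [hBT]
    _ ≤ δ * δ := mul_le_mul hB hB (norm_nonneg _) hδ0
    _ = δ ^ 2 := (sq δ).symm
  have hΓn : (0:ℝ) ≤ ‖Γ‖ := norm_nonneg _
  have hbound : ‖Γ‖ ≤ (1/12) * (2 * (δ ^ 2 * ‖Γ‖)) + ‖C‖ := by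
    calc ‖Γ‖ = ‖(1 / 12 : ℝ) • (B * Bᵀ * Γ + Γ * (B * Bᵀ)) - C‖ := by rw [← key]
    _ ≤ ‖(1 / 12 : ℝ) • (B * Bᵀ * Γ + Γ * (B * Bᵀ))‖ + ‖C‖ := norm_sub_le _ _
    _ = (1/12) * ‖B * Bᵀ * Γ + Γ * (B * Bᵀ)‖ + ‖C‖ := by
        rw [norm_smul]; norm_num
    _ ≤ (1/12) * (‖B * Bᵀ * Γ‖ + ‖Γ * (B * Bᵀ)‖) + ‖C‖ := by
        gcongr; exact norm_add_le _ _
    _ ≤ (1/12) * (2 * (δ ^ 2 * ‖Γ‖)) + ‖C‖ := by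
        gcongr (1/12) * ?_ + ‖C‖
        have h1 : ‖B * Bᵀ * Γ‖ ≤ δ ^ 2 * ‖Γ‖ :=
          le_trans (norm_mul_le _ _) (mul_le_mul hBB le_rfl hΓn (by positivity))
        have h2 : ‖Γ * (B * Bᵀ)‖ ≤ δ ^ 2 * ‖Γ‖ :=
          le_trans (norm_mul_le _ _)
            (le_of_eq (mul_comm _ _) |>.trans (mul_le_mul hBB le_rfl hΓn (by positivity)))
        linarith
  have hden : (0:ℝ) < 6 - δ ^ 2 := by nlinarith
  rw [div_mul_eq_mul_div, le_div_iff₀ hden]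
  nlinarith [norm_nonneg C]
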